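/- Let f : ℝᵐ × ℝⁿ → ℝⁿ be real analytic at (a, b) with f(a, b) = 0, and suppose the partial derivative of f with respect to the second variable at (a, b), as a linear map ℝⁿ → ℝⁿ, is invertible. Then there exist a neighbourhood V of a and a real analytic function φ : V → ℝⁿ with φ(a) = b such that f(x, φ(x)) = 0 for all x ∈ V; moreover, locally the zero set of f equals the graph of φ. -/

import Mathlib

open Set Topology

theorem stmt_11 (m n : ℕ)
    (f : (Fin m → ℝ) × (Fin n → ℝ) → (Fin n → ℝ))
    (a : Fin m → ℝ) (b : Fin n → ℝ)
    (hf : AnalyticAt ℝ f (a, b)) (hfab : f (a, b) = 0)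
    (e : (Fin n → ℝ) ≃L[ℝ] (Fin n → ℝ))
    (he : ∀ v : Fin n → ℝ, e v = fderiv ℝ f (a, b) (0, v)) :
    ∃ V : Set (Fin m → ℝ), ∃ W : Set (Fin n → ℝ), IsOpen V ∧ IsOpen W ∧
      a ∈ V ∧ b ∈ W ∧
      ∃ φ : (Fin m → ℝ) → (Fin n → ℝ), AnalyticOn ℝ φ V ∧ φ a = b ∧
        (∀ x ∈ V, φ x ∈ W) ∧
        ∀ x ∈ V, ∀ y ∈ W, (f (x, y) = 0 ↔ y = φ x) := by
  classical
  set D := fderiv ℝ f (a, b) with hD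
  have hDf : HasFDerivAt f D (a, b) := hf.differentiableAt.hasFDerivAt
  have hDsplit : ∀ u : Fin m → ℝ, ∀ v : Fin n → ℝ, D (u, v) = D (u, 0) + e v := by
    intro u v
    rw [he v]
    have : ((u, v) : (Fin m → ℝ) × (Fin n → ℝ)) = (u, 0) + (0, v) := by
      simp [Prod.ext_iff]
    rw [this, map_add]
  -- the big equiv on the product space
  set A : ((Fin m → ℝ) × (Fin n → ℝ)) →L[ℝ] ((Fin m → ℝ) × (Fin n → ℝ)) :=
    (ContinuousLinearMap.fst ℝ _ _).prod D with hA
  set B : ((Fin m → ℝ) × (Fin n → ℝ)) →L[ℝ] ((Fin m → ℝ) × (Fin n → ℝ)) :=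
    (ContinuousLinearMap.fst ℝ _ _).prod
      ((e.symm : (Fin n → ℝ) →L[ℝ] (Fin n → ℝ)).comp
        ((ContinuousLinearMap.snd ℝ _ _) -
          D.comp ((ContinuousLinearMap.fst ℝ _ _).prod 0))) with hB
  have hBA : ∀ z, B (A z) = z := by
    rintro ⟨u, v⟩
    simp only [hA, hB, ContinuousLinearMap.prod_apply, ContinuousLinearMap.coe_fst',
      ContinuousLinearMap.coe_comp', Function.comp_apply, ContinuousLinearMap.sub_apply,
      ContinuousLinearMap.coe_snd', ContinuousLinearMap.zero_apply]
    refine Prod.ext rfl ?_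
    have : D (u, v) - D (u, 0) = e v := by rw [hDsplit u v]; abel
    rw [this]
    simp
  have hAB : ∀ z, A (B z) = z := by
    rintro ⟨u, w⟩
    simp only [hA, hB, ContinuousLinearMap.prod_apply, ContinuousLinearMap.coe_fst',
      ContinuousLinearMap.coe_comp', Function.comp_apply, ContinuousLinearMap.sub_apply,
      ContinuousLinearMap.coe_snd', ContinuousLinearMap.zero_apply]
    refine Prod.ext rfl ?_
    rw [hDsplit u _]
    simp only [e.apply_symm_apply]
    simp
  set E' : ((Fin m → ℝ) × (Fin n → ℝ)) ≃L[ℝ] ((Fin m → ℝ) × (Fin n → ℝ)) :=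
    ContinuousLinearEquiv.equivOfInverse A B hBA hAB with hE'
  -- the auxiliary map F
  set F : ((Fin m → ℝ) × (Fin n → ℝ)) → ((Fin m → ℝ) × (Fin n → ℝ)) :=
    fun z => (z.1, f z) with hFdef
  have hFanal : AnalyticAt ℝ F (a, b) := analyticAt_fst.prod hf
  obtain ⟨p, hp⟩ := hFanal
  have hFderiv : HasFDerivAt F (E' : ((Fin m → ℝ) × (Fin n → ℝ)) →L[ℝ] _) (a, b) :=
    HasFDerivAt.prodMk hasFDerivAt_fst hDf
  have hp1curry : continuousMultilinearCurryFin1 ℝ ((Fin m → ℝ) × (Fin n → ℝ))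
      ((Fin m → ℝ) × (Fin n → ℝ)) (p 1) =
      (E' : ((Fin m → ℝ) × (Fin n → ℝ)) →L[ℝ] ((Fin m → ℝ) × (Fin n → ℝ))) :=
    hp.hasFDerivAt.unique hFderiv
  have hstrict : HasStrictFDerivAt F
      (E' : ((Fin m → ℝ) × (Fin n → ℝ)) →L[ℝ] ((Fin m → ℝ) × (Fin n → ℝ))) (a, b) := by
    have := hp.hasStrictFDerivAt
    rwa [hp1curry] at this
  set Φ := HasStrictFDerivAt.toOpenPartialHomeomorph F hstrict with hΦ
  have hΦcoe : ⇑Φ = F := HasStrictFDerivAt.toOpenPartialHomeomorph_coe hstrict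
  have hΦsrc : (a, b) ∈ Φ.source := HasStrictFDerivAt.mem_toOpenPartialHomeomorph_source hstrict
  have hΦab : Φ (a, b) = (a, 0) := by rw [hΦcoe]; simp [hFdef, hfab]
  have hΦtgt : ((a : Fin m → ℝ), (0 : Fin n → ℝ)) ∈ Φ.target := by
    rw [← hΦab]; exact Φ.map_source hΦsrc
  have hp1 : p 1 =
      (continuousMultilinearCurryFin1 ℝ ((Fin m → ℝ) × (Fin n → ℝ))
        ((Fin m → ℝ) × (Fin n → ℝ))).symm
        (E' : ((Fin m → ℝ) × (Fin n → ℝ)) →L[ℝ] ((Fin m → ℝ) × (Fin n → ℝ))) := by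
    rw [← hp1curry]; simp
  have hΦp : HasFPowerSeriesAt (⇑Φ) p (a, b) := by rw [hΦcoe]; exact hp
  have hsymm : HasFPowerSeriesAt (⇑Φ.symm) (p.leftInv E' (a, b)) (Φ (a, b)) :=
    Φ.hasFPowerSeriesAt_symm hΦsrc hΦp hp1
  rw [hΦab] at hsymm
  have hganal : AnalyticAt ℝ (⇑Φ.symm) (a, 0) := hsymm.analyticAt
  set g : ((Fin m → ℝ) × (Fin n → ℝ)) → ((Fin m → ℝ) × (Fin n → ℝ)) := ⇑Φ.symm with hg
  set φ : (Fin m → ℝ) → (Fin n → ℝ) := fun x => (g (x, 0)).2 with hφ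
  -- φ a = b
  have hga : g (a, 0) = (a, b) := by
    rw [hg, ← hΦab]; exact Φ.left_inv hΦsrc
  have hφa : φ a = b := by rw [hφ]; simp [hga]
  -- neighborhoods
  obtain ⟨V₀, W, hV₀W, hV₀o, hWo, haV₀, hbW⟩ :
      ∃ V₀ W, V₀ ×ˢ W ⊆ Φ.source ∧ IsOpen V₀ ∧ IsOpen W ∧ a ∈ V₀ ∧ b ∈ W := by
    rcases isOpen_prod_iff.1 Φ.open_source a b hΦsrc with ⟨V₀, W, hV₀o, hWo, haV₀, hbW, hsub⟩
    exact ⟨V₀, W, hsub, hV₀o, hWo, haV₀, hbW⟩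
  -- where g is analytic
  obtain ⟨O, hOnhds, hOanal⟩ := hganal.eventually_analyticAt.exists_mem
  obtain ⟨O', hO'sub, hO'open, hO'mem⟩ := mem_nhds_iff.1 hOnhds
  have hinclanal : ∀ x : Fin m → ℝ, AnalyticAt ℝ (fun x : Fin m → ℝ =>
      ((x, (0 : Fin n → ℝ)) : (Fin m → ℝ) × (Fin n → ℝ))) x := fun x =>
    analyticAt_id.prod analyticAt_const
  set T : Set (Fin m → ℝ) := {x | (x, (0 : Fin n → ℝ)) ∈ Φ.target} with hT
  have hTopen : IsOpen T :=
    Φ.open_target.preimage (continuous_id.prodMk continuous_const)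
  have haT : a ∈ T := hΦtgt
  set Aset : Set (Fin m → ℝ) := {x | (x, (0 : Fin n → ℝ)) ∈ O'} with hAset
  have hAopen : IsOpen Aset := hO'open.preimage (continuous_id.prodMk continuous_const)
  have haA : a ∈ Aset := hO'mem
  have hφanal : ∀ x ∈ Aset, AnalyticAt ℝ φ x := by
    intro x hx
    have hgx : AnalyticAt ℝ g (x, 0) := hOanal _ (hO'sub hx)
    have h1 : AnalyticAt ℝ (fun x : Fin m → ℝ => g (x, 0)) x :=
      AnalyticAt.comp (f := fun x : Fin m → ℝ =>
        ((x, (0 : Fin n → ℝ)) : (Fin m → ℝ) × (Fin n → ℝ))) hgx (hinclanal x)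
    exact analyticAt_snd.comp h1
  have hφcont : ContinuousOn φ Aset := fun x hx => ((hφanal x hx).continuousAt).continuousWithinAt
  set V : Set (Fin m → ℝ) := V₀ ∩ T ∩ (Aset ∩ φ ⁻¹' W) with hV
  have hVopen : IsOpen V :=
    (hV₀o.inter hTopen).inter (hφcont.isOpen_inter_preimage hAopen hWo)
  have haV : a ∈ V := ⟨⟨haV₀, haT⟩, haA, by simp [hφa, hbW]⟩
  refine ⟨V, W, hVopen, hWo, haV, hbW, φ, ?_, hφa, ?_, ?_⟩
  · exact fun x hx => ((hφanal x hx.2.1).analyticWithinAt)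
  · exact fun x hx => hx.2.2
  · rintro x ⟨⟨hxV₀, hxT⟩, hxA, hxW⟩ y hyW
    -- key facts for this x
    have hgx : Φ (g (x, 0)) = (x, 0) := Φ.right_inv hxT
    have hgx1 : (g (x, 0)).1 = x := by
      have := congrArg Prod.fst hgx
      rwa [hΦcoe] at this
    have hgxpair : g (x, 0) = (x, φ x) := by
      refine Prod.ext hgx1 rfl
    constructor
    · intro hfxy
      have hmem : ((x, y) : (Fin m → ℝ) × (Fin n → ℝ)) ∈ Φ.source :=
        hV₀W (Set.mk_mem_prod hxV₀ hyW)
      have hΦxy : Φ (x, y) = (x, 0) := by rw [hΦcoe]; simp [hFdef, hfxy]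
      have : g (x, 0) = (x, y) := by rw [hg, ← hΦxy]; exact Φ.left_inv hmem
      rw [hφ]
      simp [this]
    · intro hyeq
      have hf0 : f (g (x, 0)) = 0 := by
        have := congrArg Prod.snd hgx
        rwa [hΦcoe] at this
      rw [hgxpair, ← hyeq] at hf0
      exact hf0
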